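/- arXiv:2106.02375 — 4 statements merged into one kernel-verified Lean document; each statement's English description precedes it below -/
import Mathlib

section
/- For a unitary channel Φ_0(X)=UXU† with U a d×d unitary, min over unit vectors |ψ⟩∈ℂ^d⊗ℂ^d of ⟨ψ|(U⊗I)|ψ⟩⟨ψ|(U⊗I)†|ψ⟩ equals min over unit vectors |φ⟩∈ℂ^d of |⟨φ|U|φ⟩|², i.e., the squared distance from zero to the numerical range of U. -/
open Matrix Kronecker BigOperators


open Module

lemma joint_eigenbasis {E : Type*} [NormedAddCommGroup E] [InnerProductSpace ℂ E]
    [FiniteDimensional ℂ E] {n : ℕ} (hn : Module.finrank ℂ E = n)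
    {A B : E →ₗ[ℂ] E} (hA : A.IsSymmetric) (hB : B.IsSymmetric) (hC : Commute A B) :
    ∃ (b : OrthonormalBasis (Fin n) ℂ E) (mu nu : Fin n → ℂ),
      ∀ i, A (b i) = mu i • b i ∧ B (b i) = nu i • b i := by
  classical
  have hInt := LinearMap.IsSymmetric.directSum_isInternal_of_commute hA hB hC
  have hOrth := LinearMap.IsSymmetric.orthogonalFamily_eigenspace_inf_eigenspace hA hB
  set V : ℂ × ℂ → Submodule ℂ E :=
    fun i => Module.End.eigenspace A i.2 ⊓ Module.End.eigenspace B i.1 with hV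
  haveI : Finite {i // V i ≠ ⊥} :=
    (Submodule.finite_ne_bot_of_iSupIndep hInt.submodule_iSupIndep).to_subtype
  haveI : Fintype {i // V i ≠ ⊥} := Fintype.ofFinite _
  have hInt' : DirectSum.IsInternal (fun i : {i // V i ≠ ⊥} => V i) :=
    DirectSum.isInternal_ne_bot_iff.mpr hInt
  have hOrth' : OrthogonalFamily ℂ (fun i : {i // V i ≠ ⊥} => ↥(V i.1))
      (fun i => (V i.1).subtypeₗᵢ) := hOrth.comp Subtype.val_injective
  set b := hInt'.subordinateOrthonormalBasis hn hOrth' with hb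
  refine ⟨b, fun i => (hInt'.subordinateOrthonormalBasisIndex hn i hOrth').val.2,
    fun i => (hInt'.subordinateOrthonormalBasisIndex hn i hOrth').val.1, fun i => ?_⟩
  have hmem := hInt'.subordinateOrthonormalBasis_subordinate hn i hOrth'
  rw [Submodule.mem_inf] at hmem
  exact ⟨Module.End.mem_eigenspace_iff.mp hmem.1, Module.End.mem_eigenspace_iff.mp hmem.2⟩

open Matrix in
lemma unitary_eigenbasis {d : ℕ} (U : Matrix (Fin d) (Fin d) ℂ) (hU : Uᴴ * U = 1) :
    ∃ (b : OrthonormalBasis (Fin d) ℂ (EuclideanSpace ℂ (Fin d))) (lam : Fin d → ℂ),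
      ∀ i, Matrix.toEuclideanLin U (b i) = lam i • b i := by
  set T : EuclideanSpace ℂ (Fin d) →ₗ[ℂ] EuclideanSpace ℂ (Fin d) := Matrix.toEuclideanLin U with hT
  set Td : EuclideanSpace ℂ (Fin d) →ₗ[ℂ] EuclideanSpace ℂ (Fin d) :=
    Matrix.toEuclideanLin Uᴴ with hTd
  have hadj : Td = LinearMap.adjoint T := Matrix.toEuclideanLin_conjTranspose_eq_adjoint U
  have hU' : U * Uᴴ = 1 := mul_eq_one_comm.mp hU
  have hmul : ∀ (M N : Matrix (Fin d) (Fin d) ℂ) (v : EuclideanSpace ℂ (Fin d)),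
      Matrix.toEuclideanLin M (Matrix.toEuclideanLin N v) = Matrix.toEuclideanLin (M * N) v := by
    intro M N v
    simp [Matrix.toEuclideanLin_apply, Matrix.mulVec_mulVec]
  have hcomm : T * Td = Td * T := by
    apply LinearMap.ext
    intro v
    rw [Module.End.mul_apply, Module.End.mul_apply, hT, hTd, hmul, hmul, hU, hU']
  have hA : (T + Td).IsSymmetric := by
    intro x y
    rw [hadj]
    simp only [LinearMap.add_apply, inner_add_left, inner_add_right,
      LinearMap.adjoint_inner_left, LinearMap.adjoint_inner_right]
    ring
  have hB : (Complex.I • (Td - T)).IsSymmetric := by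
    intro x y
    rw [hadj]
    simp only [LinearMap.smul_apply, LinearMap.sub_apply, inner_smul_left, inner_smul_right,
      inner_sub_left, inner_sub_right, LinearMap.adjoint_inner_left,
      LinearMap.adjoint_inner_right, Complex.conj_I]
    ring
  have hC : Commute (T + Td) (Complex.I • (Td - T)) := by
    have c : Commute T Td := hcomm
    exact (((c.sub_right (Commute.refl T)).add_left
      ((Commute.refl Td).sub_right c.symm))).smul_right Complex.I
  have hn : Module.finrank ℂ (EuclideanSpace ℂ (Fin d)) = d := by simp
  obtain ⟨b, mu, nu, h⟩ := joint_eigenbasis hn hA hB hC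
  refine ⟨b, fun i => (2⁻¹ : ℂ) * (mu i + Complex.I * nu i), fun i => ?_⟩
  obtain ⟨h1, h2⟩ := h i
  have hTe : ∀ v, T v = (2⁻¹ : ℂ) • ((T + Td) v + Complex.I • ((Complex.I • (Td - T)) v)) := by
    intro v
    have hI : Complex.I • ((Complex.I • (Td - T)) v) = -(Td v - T v) := by
      simp only [LinearMap.smul_apply, LinearMap.sub_apply, smul_smul, Complex.I_mul_I,
        neg_one_smul]
    rw [hI]
    simp only [LinearMap.add_apply]
    module
  rw [hTe (b i), h1, h2, smul_smul, ← add_smul, smul_smul]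

open ComplexConjugate in
lemma inner_expand {d : ℕ} (b : OrthonormalBasis (Fin d) ℂ (EuclideanSpace ℂ (Fin d)))
    (T : EuclideanSpace ℂ (Fin d) →ₗ[ℂ] EuclideanSpace ℂ (Fin d)) (lam : Fin d → ℂ)
    (hb : ∀ i, T (b i) = lam i • b i) (v : EuclideanSpace ℂ (Fin d)) :
    (inner ℂ v (T v) : ℂ) = ∑ i, lam i * (conj (b.repr v i) * b.repr v i) := by
  have key : ∀ i, (inner ℂ v (b i) : ℂ) = conj (b.repr v i) := by
    intro i
    rw [b.repr_apply_apply, inner_conj_symm]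
  have hTv : T v = ∑ i, (b.repr v i * lam i) • b i := by
    conv_lhs => rw [← b.sum_repr v]
    rw [map_sum]
    simp [hb, smul_smul]
  rw [hTv, inner_sum]
  simp only [inner_smul_right, key]
  exact Finset.sum_congr rfl (by intros; ring)

open ComplexConjugate in
lemma inner_expand_self {d : ℕ} (b : OrthonormalBasis (Fin d) ℂ (EuclideanSpace ℂ (Fin d)))
    (v : EuclideanSpace ℂ (Fin d)) :
    (inner ℂ v v : ℂ) = ∑ i, conj (b.repr v i) * b.repr v i := by
  rw [← b.repr.inner_map_map v v]
  simp only [PiLp.inner_apply, RCLike.inner_apply, mul_comm]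

open Matrix in
lemma dot_eq_inner {d : ℕ} (x y : Fin d → ℂ) :
    star x ⬝ᵥ y
      = (inner ℂ ((WithLp.equiv 2 (Fin d → ℂ)).symm x) ((WithLp.equiv 2 (Fin d → ℂ)).symm y) : ℂ) := by
  simp [dotProduct, PiLp.inner_apply, RCLike.inner_apply, mul_comm]

open Matrix in
lemma mulVec_eq {d : ℕ} (U : Matrix (Fin d) (Fin d) ℂ) (x : Fin d → ℂ) :
    Matrix.toEuclideanLin U ((WithLp.equiv 2 (Fin d → ℂ)).symm x)
      = (WithLp.equiv 2 (Fin d → ℂ)).symm (U *ᵥ x) := by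
  rw [Matrix.toEuclideanLin_apply]
  rfl

open Matrix in
lemma slice_dot {d : ℕ} (ψ : Fin d × Fin d → ℂ) :
    star ψ ⬝ᵥ ψ = ∑ j, star (fun k => ψ (k, j)) ⬝ᵥ (fun k => ψ (k, j)) := by
  simp only [dotProduct, Pi.star_apply, Fintype.sum_prod_type]
  exact Finset.sum_comm

open Matrix Kronecker in
lemma slice_kron {d : ℕ} (M : Matrix (Fin d) (Fin d) ℂ) (ψ : Fin d × Fin d → ℂ) :
    star ψ ⬝ᵥ ((M ⊗ₖ (1 : Matrix (Fin d) (Fin d) ℂ)) *ᵥ ψ)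
      = ∑ j, star (fun k => ψ (k, j)) ⬝ᵥ (M *ᵥ fun k => ψ (k, j)) := by
  simp only [dotProduct, Matrix.mulVec, Pi.star_apply, Fintype.sum_prod_type,
    Matrix.kroneckerMap_apply, Matrix.one_apply, mul_ite, mul_one, mul_zero, ite_mul, zero_mul,
    Finset.sum_ite_eq, Finset.mem_univ, if_true]
  exact Finset.sum_comm


open ComplexConjugate in
/-- for a unitary `U`, the minimum over unit vectors `|ψ⟩ ∈ ℂ^d⊗ℂ^d` of
`|⟨ψ|(U⊗I)|ψ⟩|²` equals the minimum over unit vectors `|φ⟩ ∈ ℂ^d` of `|⟨φ|U|φ⟩|²`,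
i.e. the squared distance from zero to the numerical range of `U`. -/
theorem stmt9 {d : ℕ} (hd : 0 < d) (U : Matrix (Fin d) (Fin d) ℂ) (hU : Uᴴ * U = 1) :
    sInf {t : ℝ | ∃ ψ : Fin d × Fin d → ℂ, star ψ ⬝ᵥ ψ = 1 ∧
        t = ‖star ψ ⬝ᵥ ((U ⊗ₖ (1 : Matrix (Fin d) (Fin d) ℂ)) *ᵥ ψ)‖ ^ 2}
      = sInf {t : ℝ | ∃ φ : Fin d → ℂ, star φ ⬝ᵥ φ = 1 ∧
        t = ‖star φ ⬝ᵥ (U *ᵥ φ)‖ ^ 2} := by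
  classical
  set i0 : Fin d := ⟨0, hd⟩
  set S1 := {t : ℝ | ∃ ψ : Fin d × Fin d → ℂ, star ψ ⬝ᵥ ψ = 1 ∧
        t = ‖star ψ ⬝ᵥ ((U ⊗ₖ (1 : Matrix (Fin d) (Fin d) ℂ)) *ᵥ ψ)‖ ^ 2} with hS1
  set S2 := {t : ℝ | ∃ φ : Fin d → ℂ, star φ ⬝ᵥ φ = 1 ∧
        t = ‖star φ ⬝ᵥ (U *ᵥ φ)‖ ^ 2} with hS2
  have hS2ne : S2.Nonempty := by
    refine ⟨_, ⟨fun k => if k = i0 then 1 else 0, ?_, rfl⟩⟩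
    simp [dotProduct, apply_ite, Finset.sum_ite_eq']
  have hbdd1 : BddBelow S1 := by
    refine ⟨0, fun t ht => ?_⟩
    obtain ⟨ψ, -, rfl⟩ := ht
    positivity
  have hbdd2 : BddBelow S2 := by
    refine ⟨0, fun t ht => ?_⟩
    obtain ⟨φ, -, rfl⟩ := ht
    positivity
  have hsub : S2 ⊆ S1 := by
    rintro t ⟨φ, hφ, rfl⟩
    refine ⟨fun p => if p.2 = i0 then φ p.1 else 0, ?_, ?_⟩
    · rw [slice_dot]
      have hsl : ∀ j : Fin d, (fun k => if j = i0 then φ k else 0)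
          = (if j = i0 then φ else 0) := by
        intro j; ext k; split_ifs <;> rfl
      calc ∑ j : Fin d, star (fun k => if j = i0 then φ k else 0)
              ⬝ᵥ (fun k => if j = i0 then φ k else 0)
          = ∑ j : Fin d, (if j = i0 then star φ ⬝ᵥ φ else 0) := by
            refine Finset.sum_congr rfl fun j _ => ?_
            rw [hsl]
            split_ifs <;> simp
        _ = 1 := by simp [hφ]
    · have hkey : star (fun p : Fin d × Fin d => if p.2 = i0 then φ p.1 else 0) ⬝ᵥ
          ((U ⊗ₖ (1 : Matrix (Fin d) (Fin d) ℂ)) *ᵥ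
            fun p : Fin d × Fin d => if p.2 = i0 then φ p.1 else 0)
          = star φ ⬝ᵥ (U *ᵥ φ) := by
        rw [slice_kron]
        have hsl : ∀ j : Fin d, (fun k => if j = i0 then φ k else 0)
            = (if j = i0 then φ else 0) := by
          intro j; ext k; split_ifs <;> rfl
        calc ∑ j : Fin d, star (fun k => if j = i0 then φ k else 0)
                ⬝ᵥ (U *ᵥ fun k => if j = i0 then φ k else 0)
            = ∑ j : Fin d, (if j = i0 then star φ ⬝ᵥ (U *ᵥ φ) else 0) := by
              refine Finset.sum_congr rfl fun j _ => ?_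
              rw [hsl]
              split_ifs <;> simp
          _ = star φ ⬝ᵥ (U *ᵥ φ) := by simp
      rw [hkey]
  refine le_antisymm (csInf_le_csInf hbdd1 hS2ne hsub) ?_
  refine le_csInf (hS2ne.mono hsub) ?_
  rintro t ⟨ψ, hψ, rfl⟩
  obtain ⟨b, lam, hb⟩ := unitary_eigenbasis U hU
  set eqv := (WithLp.equiv 2 (Fin d → ℂ)).symm with heqv
  set c : Fin d → Fin d → ℂ := fun j i => b.repr (eqv (fun k => ψ (k, j))) i with hc
  set p : Fin d → ℝ := fun i => ∑ j, Complex.normSq (c j i) with hp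
  have hconjmul : ∀ (z : ℂ), conj z * z = ((Complex.normSq z : ℝ) : ℂ) := by
    intro z; rw [mul_comm, Complex.mul_conj]
  have hinner_dot : ∀ (x y : Fin d → ℂ), (inner ℂ (eqv x) (eqv y) : ℂ) = star x ⬝ᵥ y :=
    fun x y => (dot_eq_inner x y).symm
  have hpsum : ∑ i, ((p i : ℝ) : ℂ) = 1 := by
    calc ∑ i, ((p i : ℝ) : ℂ) = ∑ i, ∑ j, ((Complex.normSq (c j i) : ℝ) : ℂ) := by
          simp [hp]
      _ = ∑ j, ∑ i, conj (c j i) * c j i := by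
          rw [Finset.sum_comm]
          exact Finset.sum_congr rfl fun j _ => Finset.sum_congr rfl fun i _ =>
            (hconjmul (c j i)).symm
      _ = ∑ j, star (fun k => ψ (k, j)) ⬝ᵥ (fun k => ψ (k, j)) := by
          refine Finset.sum_congr rfl fun j _ => ?_
          rw [← hinner_dot, inner_expand_self b]
      _ = 1 := by rw [← slice_dot, hψ]
  have hz : star ψ ⬝ᵥ ((U ⊗ₖ (1 : Matrix (Fin d) (Fin d) ℂ)) *ᵥ ψ)
      = ∑ i, lam i * ((p i : ℝ) : ℂ) := by
    rw [slice_kron]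
    calc ∑ j, star (fun k => ψ (k, j)) ⬝ᵥ (U *ᵥ fun k => ψ (k, j))
        = ∑ j, (inner ℂ (eqv (fun k => ψ (k, j)))
            (Matrix.toEuclideanLin U (eqv (fun k => ψ (k, j)))) : ℂ) := by
          refine Finset.sum_congr rfl fun j _ => ?_
          rw [mulVec_eq, hinner_dot]
      _ = ∑ j, ∑ i, lam i * (conj (c j i) * c j i) := by
          exact Finset.sum_congr rfl fun j _ => inner_expand b _ lam hb _
      _ = ∑ i, lam i * ((p i : ℝ) : ℂ) := by
          rw [Finset.sum_comm]
          refine Finset.sum_congr rfl fun i _ => ?_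
          rw [← Finset.mul_sum]
          congr 1
          simp only [hp]
          push_cast
          exact Finset.sum_congr rfl fun j _ => (hconjmul (c j i))
  have hp0 : ∀ i, 0 ≤ p i := fun i => Finset.sum_nonneg fun j _ => Complex.normSq_nonneg _
  set w : EuclideanSpace ℂ (Fin d) := b.repr.symm (eqv (fun i => ((Real.sqrt (p i) : ℝ) : ℂ)))
    with hw
  set φ : Fin d → ℂ := WithLp.equiv 2 (Fin d → ℂ) w with hφdef
  have heqφ : eqv φ = w := by rw [hφdef, heqv, Equiv.symm_apply_apply]
  have hrepr : ∀ i, b.repr w i = ((Real.sqrt (p i) : ℝ) : ℂ) := by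
    intro i
    rw [hw, LinearIsometryEquiv.apply_symm_apply]
    rfl
  have hsq : ∀ i, conj (b.repr w i) * b.repr w i = ((p i : ℝ) : ℂ) := by
    intro i
    rw [hrepr, Complex.conj_ofReal, ← Complex.ofReal_mul, Real.mul_self_sqrt (hp0 i)]
  have hunit : star φ ⬝ᵥ φ = 1 := by
    rw [← hinner_dot, heqφ, inner_expand_self b]
    simp only [hsq]
    exact hpsum
  have hval : star φ ⬝ᵥ (U *ᵥ φ) = ∑ i, lam i * ((p i : ℝ) : ℂ) := by
    rw [← hinner_dot, heqφ]
    have := mulVec_eq U φ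
    rw [heqφ] at this
    rw [← this, inner_expand b _ lam hb]
    exact Finset.sum_congr rfl fun i _ => by rw [hsq]
  refine csInf_le hbdd2 ⟨φ, hunit, ?_⟩
  rw [hval, hz]
end

section
/- Let M = Σ_k α_k |x_k⟩⟨x_k| be the spectral decomposition of a positive semidefinite d×d matrix with all α_k > 0. Then the quantum-classical channel ρ ↦ Σ_i |i⟩⟨i| Tr(M_i ρ) with effects {M_i} has Kraus operators {√(α_{k_i}^i) |i⟩⟨x_{k_i}^i|}, and span of these Kraus operators for POVM 𝒫_0 is not contained in the corresponding span for POVM 𝒫_1 if and only if there exists an index i for which supp(M_i) ⊄ supp(N_i). -/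
open Matrix BigOperators

section Aux

variable {d m : ℕ}

/-- Extract row `i` of a matrix, as a linear map. -/
def rowLM (i : Fin m) : Matrix (Fin m) (Fin d) ℂ →ₗ[ℂ] (Fin d → ℂ) where
  toFun A := A i
  map_add' _ _ := rfl
  map_smul' _ _ := rfl

/-- `w ↦ vecMulVec (Pi.single i 1) w`, as a linear map. -/
def vmvLM (i : Fin m) : (Fin d → ℂ) →ₗ[ℂ] Matrix (Fin m) (Fin d) ℂ where
  toFun w := vecMulVec (Pi.single i 1) w
  map_add' w w' := by ext a b; simp [vecMulVec_apply, mul_add]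
  map_smul' c w := by ext a b; simp [vecMulVec_apply]; ring

lemma rowLM_apply (i : Fin m) (A : Matrix (Fin m) (Fin d) ℂ) : rowLM i A = A i := rfl

lemma vmvLM_apply (i : Fin m) (w : Fin d → ℂ) :
    vmvLM i w = vecMulVec (Pi.single i 1) w := rfl

lemma rowLM_vmv (i i' : Fin m) (w : Fin d → ℂ) :
    rowLM i (vecMulVec (Pi.single i' 1) w) = if i' = i then w else 0 := by
  by_cases hii : i' = i
  · subst hii
    rw [if_pos rfl]
    ext b
    simp [rowLM_apply, vecMulVec_apply]
  · rw [if_neg hii]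
    ext b
    simp only [rowLM_apply, vecMulVec_apply, Pi.single_apply, Pi.zero_apply]
    rw [if_neg (fun h => hii h.symm)]
    simp

lemma star_mem_span {n : ℕ} {S : Set (Fin n → ℂ)} {v : Fin n → ℂ}
    (h : v ∈ Submodule.span ℂ S) : star v ∈ Submodule.span ℂ (star '' S) := by
  induction h using Submodule.span_induction with
  | mem w hw => exact Submodule.subset_span ⟨w, hw, rfl⟩
  | zero => simpa using Submodule.zero_mem _
  | add a b _ _ ha hb => rw [star_add]; exact Submodule.add_mem _ ha hb
  | smul c a _ ha =>
      rw [star_smul]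
      exact Submodule.smul_mem _ _ ha

lemma span_star_mono {n : ℕ} {S T : Set (Fin n → ℂ)}
    (h : Submodule.span ℂ S ≤ Submodule.span ℂ T) :
    Submodule.span ℂ (star '' S) ≤ Submodule.span ℂ (star '' T) := by
  rw [Submodule.span_le]
  rintro _ ⟨v, hv, rfl⟩
  exact star_mem_span (h (Submodule.subset_span hv))

lemma span_star_le_iff {n : ℕ} {S T : Set (Fin n → ℂ)} :
    Submodule.span ℂ (star '' S) ≤ Submodule.span ℂ (star '' T) ↔
      Submodule.span ℂ S ≤ Submodule.span ℂ T := by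
  constructor
  · intro h
    have := span_star_mono h
    rwa [Set.image_image, Set.image_image, show (fun v => star (star v)) = (id : (Fin n → ℂ) → _)
      from funext fun v => star_star v, Set.image_id, Set.image_id] at this
  · exact span_star_mono

lemma vecMulVec_mulVec {n : ℕ} (u v w : Fin n → ℂ) :
    vecMulVec u v *ᵥ w = (v ⬝ᵥ w) • u := by
  ext a
  simp [mulVec, vecMulVec_apply, dotProduct, Finset.sum_mul, Finset.mul_sum]
  exact Finset.sum_congr rfl fun c _ => by ring

lemma sandwich {n : ℕ} (u : Fin m → ℂ) (v : Fin n → ℂ) (ρ : Matrix (Fin n) (Fin n) ℂ) :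
    vecMulVec u v * ρ * (vecMulVec u v)ᴴ = (v ⬝ᵥ ρ *ᵥ star v) • vecMulVec u (star u) := by
  ext a b
  simp [mul_apply, vecMulVec_apply, conjTranspose_apply, mulVec, dotProduct,
    Finset.sum_mul, Finset.mul_sum, smul_eq_mul]
  rw [Finset.sum_comm]
  refine Finset.sum_congr rfl fun c _ => Finset.sum_congr rfl fun c' _ => by ring

lemma trace_vmv {n : ℕ} (x : Fin n → ℂ) (ρ : Matrix (Fin n) (Fin n) ℂ) :
    (vecMulVec x (star x) * ρ).trace = star x ⬝ᵥ ρ *ᵥ x := by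
  simp [trace, diag, mul_apply, vecMulVec_apply, mulVec, dotProduct, Finset.mul_sum]
  rw [Finset.sum_comm]
  refine Finset.sum_congr rfl fun c _ => Finset.sum_congr rfl fun c' _ => by ring

lemma star_single (i : Fin m) :
    star (Pi.single i (1 : ℂ) : Fin m → ℂ) = Pi.single i 1 := by
  ext a
  simp only [Pi.star_apply, Pi.single_apply]
  split <;> simp

lemma range_mulVecLin_eq_span {n : ℕ} (α : Fin n → ℝ) (hα : ∀ k, 0 < α k)
    (x : Fin n → Fin d → ℂ)
    (hx : ∀ k l, star (x k) ⬝ᵥ x l = if k = l then 1 else 0)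
    (M : Matrix (Fin d) (Fin d) ℂ)
    (hM : M = ∑ k, (α k : ℂ) • vecMulVec (x k) (star (x k))) :
    LinearMap.range M.mulVecLin = Submodule.span ℂ (Set.range x) := by
  have hMv : ∀ w, M *ᵥ w = ∑ k, ((α k : ℂ) * (star (x k) ⬝ᵥ w)) • x k := by
    intro w
    rw [hM]
    ext a
    simp [mulVec, dotProduct, Matrix.sum_apply, vecMulVec_apply, Finset.sum_mul,
      Finset.mul_sum, smul_eq_mul]
    rw [Finset.sum_comm]
    refine Finset.sum_congr rfl fun k _ => Finset.sum_congr rfl fun c _ => by ring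
  apply le_antisymm
  · rintro v ⟨w, rfl⟩
    rw [Matrix.mulVecLin_apply, hMv]
    exact Submodule.sum_mem _ fun k _ =>
      Submodule.smul_mem _ _ (Submodule.subset_span ⟨k, rfl⟩)
  · rw [Submodule.span_le]
    rintro _ ⟨l, rfl⟩
    refine ⟨(α l : ℂ)⁻¹ • x l, ?_⟩
    rw [Matrix.mulVecLin_apply, Matrix.mulVec_smul, hMv]
    have : ∀ k, ((α k : ℂ) * (star (x k) ⬝ᵥ x l)) • x k
        = if k = l then (α l : ℂ) • x l else 0 := by
      intro k
      rw [hx k l]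
      split
      · subst ‹k = l›; simp
      · simp
    rw [Finset.sum_congr rfl fun k _ => this k, Finset.sum_ite_eq' Finset.univ l
      (fun _ => (α l : ℂ) • x l), if_pos (Finset.mem_univ l), smul_smul,
      inv_mul_cancel₀ (show (α l : ℂ) ≠ 0 by exact_mod_cast (hα l).ne'), one_smul]

end Aux

/-- POVMs `𝒫₀ = {M_i}`, `𝒫₁ = {N_i}` with spectral decompositions
`M_i = Σ_k α_k^i |x_k^i⟩⟨x_k^i|`, `N_i = Σ_k β_k^i |y_k^i⟩⟨y_k^i|` (positive eigenvalues,
orthonormal eigenvectors). The quantum-classical channel `ρ ↦ Σ_i Tr(M_i ρ)|i⟩⟨i|` has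
Kraus operators `√α_k^i |i⟩⟨x_k^i|`, and the span of the Kraus operators of `𝒫₀` is not
contained in the span of those of `𝒫₁` iff `supp(M_i) ⊄ supp(N_i)` for some `i`. -/
theorem stmt10 {d m : ℕ} (r s : Fin m → ℕ)
    (α : (i : Fin m) → Fin (r i) → ℝ) (β : (i : Fin m) → Fin (s i) → ℝ)
    (x : (i : Fin m) → Fin (r i) → (Fin d → ℂ)) (y : (i : Fin m) → Fin (s i) → (Fin d → ℂ))
    (hα : ∀ i k, 0 < α i k) (hβ : ∀ i k, 0 < β i k)
    (hx : ∀ i k l, star (x i k) ⬝ᵥ x i l = if k = l then 1 else 0)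
    (hy : ∀ i k l, star (y i k) ⬝ᵥ y i l = if k = l then 1 else 0)
    (M N : Fin m → Matrix (Fin d) (Fin d) ℂ)
    (hM : ∀ i, M i = ∑ k, (α i k : ℂ) • vecMulVec (x i k) (star (x i k)))
    (hN : ∀ i, N i = ∑ k, (β i k : ℂ) • vecMulVec (y i k) (star (y i k)))
    (hPOVM0 : ∑ i, M i = 1) (hPOVM1 : ∑ i, N i = 1) :
    (∀ ρ : Matrix (Fin d) (Fin d) ℂ,
      ∑ i, ∑ k, ((Real.sqrt (α i k) : ℂ) • vecMulVec (Pi.single i 1) (star (x i k))) * ρ *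
          ((Real.sqrt (α i k) : ℂ) • vecMulVec (Pi.single i 1) (star (x i k)))ᴴ
        = ∑ i, (M i * ρ).trace • Matrix.single i i (1 : ℂ)) ∧
    (¬ Submodule.span ℂ
        (Set.range fun p : Σ i : Fin m, Fin (r i) =>
          (Real.sqrt (α p.1 p.2) : ℂ) • vecMulVec (Pi.single p.1 1) (star (x p.1 p.2))) ≤
      Submodule.span ℂ
        (Set.range fun p : Σ i : Fin m, Fin (s i) =>
          (Real.sqrt (β p.1 p.2) : ℂ) • vecMulVec (Pi.single p.1 1) (star (y p.1 p.2)))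
      ↔ ∃ i, ¬ LinearMap.range (M i).mulVecLin ≤ LinearMap.range (N i).mulVecLin) := by
  constructor
  · -- Part 1: the Kraus form of the channel
    intro ρ
    refine Finset.sum_congr rfl fun i _ => ?_
    have hterm : ∀ k, ((Real.sqrt (α i k) : ℂ) • vecMulVec (Pi.single i 1) (star (x i k))) * ρ *
        ((Real.sqrt (α i k) : ℂ) • vecMulVec (Pi.single i 1) (star (x i k)))ᴴ
        = ((α i k : ℂ) * (star (x i k) ⬝ᵥ ρ *ᵥ x i k)) • Matrix.single i i (1 : ℂ) := by
      intro k
      rw [conjTranspose_smul, Matrix.smul_mul, Matrix.smul_mul, Matrix.mul_smul, smul_smul,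
        sandwich, star_star, star_single, ← single_eq_single_vecMulVec_single,
        smul_smul]
      congr 1
      have hs : ((Real.sqrt (α i k) : ℝ) : ℂ) * star ((Real.sqrt (α i k) : ℝ) : ℂ)
          = ((α i k : ℝ) : ℂ) := by
        rw [RCLike.star_def, Complex.conj_ofReal, ← Complex.ofReal_mul,
          Real.mul_self_sqrt (hα i k).le]
      rw [hs]
    rw [Finset.sum_congr rfl fun k _ => hterm k]
    have htr : (M i * ρ).trace = ∑ k, (α i k : ℂ) * (star (x i k) ⬝ᵥ ρ *ᵥ x i k) := by
      rw [hM i, Finset.sum_mul, trace_sum]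
      refine Finset.sum_congr rfl fun k _ => ?_
      rw [smul_mul_assoc, trace_smul, trace_vmv, smul_eq_mul]
    rw [htr, Finset.sum_smul]
  · -- Part 2
    have key : (Submodule.span ℂ
        (Set.range fun p : Σ i : Fin m, Fin (r i) =>
          (Real.sqrt (α p.1 p.2) : ℂ) • vecMulVec (Pi.single p.1 1) (star (x p.1 p.2))) ≤
      Submodule.span ℂ
        (Set.range fun p : Σ i : Fin m, Fin (s i) =>
          (Real.sqrt (β p.1 p.2) : ℂ) • vecMulVec (Pi.single p.1 1) (star (y p.1 p.2))))
        ↔ ∀ i, Submodule.span ℂ (Set.range fun k => star (x i k)) ≤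
            Submodule.span ℂ (Set.range fun k => star (y i k)) := by
      constructor
      · intro h i
        rw [Submodule.span_le]
        rintro _ ⟨k, rfl⟩
        have hk : ((Real.sqrt (α i k) : ℂ) • vecMulVec (Pi.single i 1) (star (x i k))) ∈
            Submodule.span ℂ (Set.range fun p : Σ i : Fin m, Fin (s i) =>
              (Real.sqrt (β p.1 p.2) : ℂ) • vecMulVec (Pi.single p.1 1) (star (y p.1 p.2))) :=
          h (Submodule.subset_span ⟨⟨i, k⟩, rfl⟩)
        have hmap : rowLM i ((Real.sqrt (α i k) : ℂ) •
            vecMulVec (Pi.single i 1) (star (x i k))) ∈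
            Submodule.map (rowLM i) (Submodule.span ℂ
              (Set.range fun p : Σ i : Fin m, Fin (s i) =>
                (Real.sqrt (β p.1 p.2) : ℂ) • vecMulVec (Pi.single p.1 1) (star (y p.1 p.2)))) :=
          ⟨_, hk, rfl⟩
        rw [Submodule.map_span] at hmap
        have hle : Submodule.span ℂ ((rowLM i) ''
            (Set.range fun p : Σ i : Fin m, Fin (s i) =>
              (Real.sqrt (β p.1 p.2) : ℂ) • vecMulVec (Pi.single p.1 1) (star (y p.1 p.2)))) ≤
            Submodule.span ℂ (Set.range fun k => star (y i k)) := by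
          rw [Submodule.span_le]
          rintro _ ⟨_, ⟨⟨i', k'⟩, rfl⟩, rfl⟩
          simp only [SetLike.mem_coe, LinearMap.map_smul, rowLM_vmv]
          by_cases hii : i' = i
          · subst hii
            rw [if_pos rfl]
            exact Submodule.smul_mem _ _ (Submodule.subset_span ⟨k', rfl⟩)
          · rw [if_neg hii, smul_zero]
            exact Submodule.zero_mem _
        have hmem : (Real.sqrt (α i k) : ℂ) • star (x i k) ∈
            Submodule.span ℂ (Set.range fun k => star (y i k)) := by
          have := hle hmap
          rwa [LinearMap.map_smul, rowLM_vmv, if_pos rfl] at this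
        have hne : (Real.sqrt (α i k) : ℂ) ≠ 0 := by
          simpa using (Real.sqrt_pos.mpr (hα i k)).ne'
        have := Submodule.smul_mem (Submodule.span ℂ (Set.range fun k => star (y i k)))
          ((Real.sqrt (α i k) : ℂ))⁻¹ hmem
        rwa [smul_smul, inv_mul_cancel₀ hne, one_smul] at this
      · intro h
        rw [Submodule.span_le]
        rintro _ ⟨⟨i, k⟩, rfl⟩
        have hmem : star (x i k) ∈
            Submodule.span ℂ (Set.range fun k => star (y i k)) :=
          h i (Submodule.subset_span ⟨k, rfl⟩)
        have hmap : vmvLM i (star (x i k)) ∈ Submodule.map (vmvLM i)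
            (Submodule.span ℂ (Set.range fun k => star (y i k))) := ⟨_, hmem, rfl⟩
        rw [Submodule.map_span] at hmap
        have hle : Submodule.span ℂ ((vmvLM i) '' Set.range fun k => star (y i k)) ≤
            Submodule.span ℂ (Set.range fun p : Σ i : Fin m, Fin (s i) =>
              (Real.sqrt (β p.1 p.2) : ℂ) • vecMulVec (Pi.single p.1 1) (star (y p.1 p.2))) := by
          rw [Submodule.span_le]
          rintro _ ⟨_, ⟨k', rfl⟩, rfl⟩
          simp only [SetLike.mem_coe]
          have hne : (Real.sqrt (β i k') : ℂ) ≠ 0 := by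
            simpa using (Real.sqrt_pos.mpr (hβ i k')).ne'
          have : vmvLM i (star (y i k')) = ((Real.sqrt (β i k') : ℂ))⁻¹ •
              ((Real.sqrt (β i k') : ℂ) • vecMulVec (Pi.single i 1) (star (y i k'))) := by
            rw [smul_smul, inv_mul_cancel₀ hne, one_smul, vmvLM_apply]
          rw [this]
          exact Submodule.smul_mem _ _ (Submodule.subset_span ⟨⟨i, k'⟩, rfl⟩)
        have := hle hmap
        rw [vmvLM_apply] at this
        exact Submodule.smul_mem _ _ this
    rw [key, not_forall]
    apply exists_congr
    intro i
    apply not_congr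
    have hMr : LinearMap.range (M i).mulVecLin = Submodule.span ℂ (Set.range (x i)) :=
      range_mulVecLin_eq_span (α i) (hα i) (x i) (hx i) (M i) (hM i)
    have hNr : LinearMap.range (N i).mulVecLin = Submodule.span ℂ (Set.range (y i)) :=
      range_mulVecLin_eq_span (β i) (hβ i) (y i) (hy i) (N i) (hN i)
    show Submodule.span ℂ (Set.range fun k => star (x i k)) ≤
        Submodule.span ℂ (Set.range fun k => star (y i k)) ↔ _
    rw [hMr, hNr]
    have ex : (Set.range fun k => star (x i k)) = star '' Set.range (x i) := by
      rw [← Set.range_comp]; rfl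
    have ey : (Set.range fun k => star (y i k)) = star '' Set.range (y i) := by
      rw [← Set.range_comp]; rfl
    rw [ex, ey]
    exact span_star_le_iff
end

section
/- Let Φ_0(X)=Σ_i E_i X E_i† and Φ_1(X)=Σ_j F_j X F_j† be quantum channels on d×d matrices. If span{E_i} ⊄ span{F_j}, then there exist a unit vector |ψ⟩ ∈ ℂ^d⊗ℂ^d, a rank-one projection Ω_0 on ℂ^d⊗ℂ^d, and a real q ∈ (0,1] such that Tr(Ω_0 (Φ_1⊗I)(|ψ⟩⟨ψ|)) = 0 and Tr(Ω_0 (Φ_0⊗I)(|ψ⟩⟨ψ|)) = q > 0. -/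
open Matrix Kronecker BigOperators

section Aux

variable {n : Type*} [Fintype n]

lemma aux_trace (v a : n → ℂ) :
    (vecMulVec v (star v) * vecMulVec a (star a)).trace
      = (star v ⬝ᵥ a) * (star a ⬝ᵥ v) := by
  simp only [Matrix.trace, Matrix.diag_apply, Matrix.mul_apply, vecMulVec_apply,
    dotProduct, Pi.star_apply, Finset.sum_mul, Finset.mul_sum]
  exact Finset.sum_congr rfl fun k _ => Finset.sum_congr rfl fun i _ => by ring

lemma aux_sandwich (M : Matrix n n ℂ) (a : n → ℂ) :
    M * vecMulVec a (star a) * Mᴴ = vecMulVec (M *ᵥ a) (star (M *ᵥ a)) := by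
  ext i j
  simp only [Matrix.mul_apply, vecMulVec_apply, mulVec, dotProduct, Pi.star_apply,
    conjTranspose_apply, star_sum, star_mul', Finset.sum_mul, Finset.mul_sum]
  exact Finset.sum_congr rfl fun k _ => Finset.sum_congr rfl fun l _ => by ring

lemma aux_dot_conj (v u : n → ℂ) : star u ⬝ᵥ v = starRingEnd ℂ (star v ⬝ᵥ u) := by
  simp only [dotProduct, map_sum, _root_.map_mul, Pi.star_apply, RingHomCompTriple.comp_apply,
    Complex.conj_conj]
  exact Finset.sum_congr rfl fun k _ => by simp [mul_comm]

end Aux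

lemma aux_kron_mulVec {d : ℕ} (A : Matrix (Fin d) (Fin d) ℂ) (c : ℂ) :
    ((A ⊗ₖ (1 : Matrix (Fin d) (Fin d) ℂ)) *ᵥ
        (fun q : Fin d × Fin d => if q.1 = q.2 then c else 0))
      = fun p => c * A p.1 p.2 := by
  funext p
  cases p with
  | mk i j =>
    simp [mulVec, dotProduct, Fintype.sum_prod_type, Matrix.one_apply, ite_and,
      mul_comm, Finset.sum_ite_eq, Finset.sum_ite_eq']

noncomputable def vecE (d : ℕ) : Matrix (Fin d) (Fin d) ℂ ≃ₗ[ℂ] EuclideanSpace ℂ (Fin d × Fin d) where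
  toFun A := WithLp.toLp 2 (fun p : Fin d × Fin d => A p.1 p.2)
  invFun v := Matrix.of fun i j => v (i, j)
  map_add' _ _ := rfl
  map_smul' _ _ := rfl
  left_inv _ := rfl
  right_inv _ := rfl


/-- for quantum channels `Φ₀(X)=Σ_i E_i X E_i†`, `Φ₁(X)=Σ_j F_j X F_j†`,
if `span{E_i} ⊄ span{F_j}` then there exist a unit vector `|ψ⟩ ∈ ℂ^d⊗ℂ^d`, a rank-one
projection `Ω₀ = |v⟩⟨v|`, and `q ∈ (0,1]` with
`Tr(Ω₀ (Φ₁⊗I)(|ψ⟩⟨ψ|)) = 0` and `Tr(Ω₀ (Φ₀⊗I)(|ψ⟩⟨ψ|)) = q > 0`. -/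
theorem stmt16 {d r s : ℕ} (E : Fin r → Matrix (Fin d) (Fin d) ℂ)
    (F : Fin s → Matrix (Fin d) (Fin d) ℂ)
    (hE : ∑ i, (E i)ᴴ * E i = 1) (hF : ∑ j, (F j)ᴴ * F j = 1)
    (h : ¬ Submodule.span ℂ (Set.range E) ≤ Submodule.span ℂ (Set.range F)) :
    ∃ (ψ v : Fin d × Fin d → ℂ) (q : ℝ),
      star ψ ⬝ᵥ ψ = 1 ∧ star v ⬝ᵥ v = 1 ∧ 0 < q ∧ q ≤ 1 ∧
      (vecMulVec v (star v) *
          ∑ j, (F j ⊗ₖ (1 : Matrix (Fin d) (Fin d) ℂ)) * vecMulVec ψ (star ψ) *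
            ((F j ⊗ₖ (1 : Matrix (Fin d) (Fin d) ℂ)))ᴴ).trace = 0 ∧
      (vecMulVec v (star v) *
          ∑ i, (E i ⊗ₖ (1 : Matrix (Fin d) (Fin d) ℂ)) * vecMulVec ψ (star ψ) *
            ((E i ⊗ₖ (1 : Matrix (Fin d) (Fin d) ℂ)))ᴴ).trace = (q : ℂ) := by
  -- dispose of the degenerate case d = 0
  rcases Nat.eq_zero_or_pos d with hd | hd
  · exfalso
    apply h
    rw [Submodule.span_le]
    rintro x ⟨i, rfl⟩
    subst hd
    have : E i = 0 := Subsingleton.elim _ _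
    rw [this]
    exact Submodule.zero_mem _
  -- pick a Kraus operator of Φ₀ outside the span of those of Φ₁
  obtain ⟨i0, hx0F⟩ : ∃ i0, E i0 ∉ Submodule.span ℂ (Set.range F) := by
    by_contra hc
    push_neg at hc
    exact h (Submodule.span_le.2 (by rintro x ⟨i, rfl⟩; exact hc i))
  set e := vecE d with he
  set W : Submodule ℂ (EuclideanSpace ℂ (Fin d × Fin d)) :=
    Submodule.span ℂ (Set.range fun j => e (F j)) with hW
  have hx : e (E i0) ∉ W := by
    have hWmap : W = Submodule.map (e : Matrix (Fin d) (Fin d) ℂ →ₗ[ℂ] _)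
        (Submodule.span ℂ (Set.range F)) := by
      rw [Submodule.map_span, hW, ← Set.range_comp]
      rfl
    rw [hWmap]
    rintro ⟨y, hy, hxy⟩
    exact hx0F (by rwa [← e.injective hxy])
  have hxo : e (E i0) ∉ Wᗮᗮ := by rwa [Submodule.orthogonal_orthogonal]
  rw [Submodule.mem_orthogonal] at hxo
  push_neg at hxo
  obtain ⟨y, hyW, hyx⟩ := hxo
  have hy0 : y ≠ 0 := by rintro rfl; simp at hyx
  set v : EuclideanSpace ℂ (Fin d × Fin d) := ((‖y‖⁻¹ : ℝ) : ℂ) • y with hv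
  have hvW : v ∈ Wᗮ := Submodule.smul_mem _ _ hyW
  have hvnorm : ‖v‖ = 1 := by
    rw [hv, norm_smul]
    simp only [Complex.norm_real, norm_inv, norm_norm]
    exact inv_mul_cancel₀ (norm_ne_zero_iff.2 hy0)
  have hvx : (inner ℂ v (e (E i0)) : ℂ) ≠ 0 := by
    rw [hv, inner_smul_left, Complex.conj_ofReal]
    exact mul_ne_zero (by simpa using hy0) hyx
  -- the maximally entangled state
  set cR : ℝ := (Real.sqrt d)⁻¹ with hcR
  have hcRpos : 0 < cR := by
    rw [hcR]
    exact inv_pos.2 (Real.sqrt_pos.2 (by exact_mod_cast hd))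
  have hc2 : cR ^ 2 * d = 1 := by
    rw [hcR, inv_pow, Real.sq_sqrt (by positivity)]
    rw [inv_mul_cancel₀ (by exact_mod_cast hd.ne')]
  set ψ : Fin d × Fin d → ℂ := fun p => if p.1 = p.2 then (cR : ℂ) else 0 with hψ
  set z : Matrix (Fin d) (Fin d) ℂ → ℂ :=
    fun A => star (v : Fin d × Fin d → ℂ) ⬝ᵥ ((A ⊗ₖ (1 : Matrix (Fin d) (Fin d) ℂ)) *ᵥ ψ)
    with hzdef
  have hz : ∀ A : Matrix (Fin d) (Fin d) ℂ, z A = (cR : ℂ) * inner ℂ v (e A) := by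
    intro A
    have hi : (inner ℂ v (e A) : ℂ)
        = star (v : Fin d × Fin d → ℂ) ⬝ᵥ (fun p : Fin d × Fin d => A p.1 p.2) := ((EuclideanSpace.inner_eq_star_dotProduct _ _).trans (dotProduct_comm _ _))
    rw [hzdef, hi]
    simp only [hψ, aux_kron_mulVec, dotProduct, Finset.mul_sum]
    exact Finset.sum_congr rfl fun p _ => by ring
  have key : ∀ G : Matrix (Fin d) (Fin d) ℂ,
      (vecMulVec (v : Fin d × Fin d → ℂ) (star (v : Fin d × Fin d → ℂ)) *
        ((G ⊗ₖ (1 : Matrix (Fin d) (Fin d) ℂ)) * vecMulVec ψ (star ψ) *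
          (G ⊗ₖ (1 : Matrix (Fin d) (Fin d) ℂ))ᴴ)).trace
        = ((Complex.normSq (z G) : ℝ) : ℂ) := by
    intro G
    rw [aux_sandwich, aux_trace,
      aux_dot_conj ((v : Fin d × Fin d → ℂ)) ((G ⊗ₖ (1 : Matrix (Fin d) (Fin d) ℂ)) *ᵥ ψ),
      Complex.mul_conj]
  set q : ℝ := ∑ i, Complex.normSq (z (E i)) with hq
  have hzF : ∀ j, z (F j) = 0 := by
    intro j
    rw [hz]
    have : (inner ℂ v (e (F j)) : ℂ) = 0 := by
      rw [Submodule.mem_orthogonal'] at hvW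
      exact hvW _ (Submodule.subset_span ⟨j, rfl⟩)
    rw [this, mul_zero]
  have hzE0 : z (E i0) ≠ 0 := by
    rw [hz]
    exact mul_ne_zero (by exact_mod_cast hcRpos.ne') hvx
  refine ⟨ψ, v, q, ?_, ?_, ?_, ?_, ?_, ?_⟩
  · -- ψ is a unit vector
    have : star ψ ⬝ᵥ ψ = ((cR ^ 2 * d : ℝ) : ℂ) := by
      simp only [hψ, dotProduct, Pi.star_apply, Fintype.sum_prod_type, apply_ite,
        star_zero, Complex.conj_ofReal, ite_mul, zero_mul, mul_ite, mul_zero,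
        RCLike.star_def, Finset.sum_ite_eq, Finset.mem_univ, if_true]
      rw [Finset.sum_const, Finset.card_univ, Fintype.card_fin]
      push_cast
      ring
    rw [this, hc2, Complex.ofReal_one]
  · -- v is a unit vector
    have : star (v : Fin d × Fin d → ℂ) ⬝ᵥ v = (inner ℂ v v : ℂ) := ((EuclideanSpace.inner_eq_star_dotProduct _ _).trans (dotProduct_comm _ _)).symm
    rw [this, inner_self_eq_norm_sq_to_K, hvnorm]
    norm_num
  · -- 0 < q
    refine Finset.sum_pos' (fun i _ => Complex.normSq_nonneg _)
      ⟨i0, Finset.mem_univ _, Complex.normSq_pos.2 hzE0⟩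
  · -- q ≤ 1
    have hdiag : ∀ b : Fin d, ∑ i, ∑ a, Complex.normSq (E i a b) = 1 := by
      intro b
      have h1 : (∑ i, (E i)ᴴ * E i) b b = (1 : Matrix (Fin d) (Fin d) ℂ) b b := by rw [hE]
      rw [Matrix.one_apply_eq] at h1
      simp only [Matrix.sum_apply, Matrix.mul_apply, Matrix.conjTranspose_apply] at h1
      have h2 : ((∑ i, ∑ a, Complex.normSq (E i a b) : ℝ) : ℂ) = 1 := by
        rw [← h1]
        push_cast
        exact Finset.sum_congr rfl fun i _ => Finset.sum_congr rfl fun a _ => by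
          rw [Complex.normSq_eq_conj_mul_self]
          rfl
      exact_mod_cast h2
    have hEd : ∑ i, ∑ p : Fin d × Fin d, Complex.normSq (E i p.1 p.2) = (d : ℝ) := by
      have hre : ∀ i : Fin r, ∑ p : Fin d × Fin d, Complex.normSq (E i p.1 p.2)
          = ∑ b, ∑ a, Complex.normSq (E i a b) := by
        intro i
        rw [Fintype.sum_prod_type]
        exact Finset.sum_comm
      rw [Finset.sum_congr rfl fun i _ => hre i, Finset.sum_comm]
      simp [hdiag]
    have hbound : ∀ i : Fin r, Complex.normSq (z (E i))
        ≤ cR ^ 2 * ∑ p : Fin d × Fin d, Complex.normSq (E i p.1 p.2) := by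
      intro i
      set U : EuclideanSpace ℂ (Fin d × Fin d)
        := WithLp.toLp 2 ((E i ⊗ₖ (1 : Matrix (Fin d) (Fin d) ℂ)) *ᵥ ψ) with hU
      have hzi : z (E i) = inner ℂ v U := ((EuclideanSpace.inner_eq_star_dotProduct _ _).trans (dotProduct_comm _ _)).symm
      have h1 : ‖z (E i)‖ ≤ ‖U‖ := by
        rw [hzi]
        calc ‖(inner ℂ v U : ℂ)‖ ≤ ‖v‖ * ‖U‖ := norm_inner_le_norm v U
          _ = ‖U‖ := by rw [hvnorm, one_mul]
      have h2 : ‖U‖ ^ 2 = cR ^ 2 * ∑ p : Fin d × Fin d, Complex.normSq (E i p.1 p.2) := by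
        rw [EuclideanSpace.norm_eq, Real.sq_sqrt (Finset.sum_nonneg fun _ _ => by positivity)]
        rw [Finset.mul_sum]
        refine Finset.sum_congr rfl fun p _ => ?_
        have hUp : U p = (cR : ℂ) * E i p.1 p.2 := by
          rw [hU, hψ, aux_kron_mulVec]
        rw [hUp, norm_mul, mul_pow, Complex.norm_real, Real.norm_eq_abs, sq_abs,
          Complex.sq_norm]
      calc Complex.normSq (z (E i)) = ‖z (E i)‖ ^ 2 := by
            rw [Complex.normSq_eq_norm_sq]
        _ ≤ ‖U‖ ^ 2 := by
            exact pow_le_pow_left₀ (norm_nonneg _) h1 2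
        _ = _ := h2
    calc q ≤ ∑ i, cR ^ 2 * ∑ p : Fin d × Fin d, Complex.normSq (E i p.1 p.2) :=
          Finset.sum_le_sum fun i _ => hbound i
      _ = cR ^ 2 * (d : ℝ) := by rw [← Finset.mul_sum, hEd]
      _ = 1 := hc2
  · -- the Φ₁ trace vanishes
    rw [Finset.mul_sum, Matrix.trace_sum]
    simp only [key, hzF]
    simp
  · -- the Φ₀ trace equals q
    rw [Finset.mul_sum, Matrix.trace_sum]
    simp only [key]
    rw [hq]
    push_cast
    rfl
end

section
/- Let Φ_0, Φ_1 be quantum channels with Kraus operators {E_i} and {F_j}. If there exist N ∈ ℕ, a unit vector |ψ⟩, and a positive semidefinite Ω_0 ≤ I such that Tr(Ω_0 (Φ_1^{⊗N}⊗I)(|ψ⟩⟨ψ|)) = 0 and Tr(Ω_0 (Φ_0^{⊗N}⊗I)(|ψ⟩⟨ψ|)) > 0, then span{E_i} ⊄ span{F_j}. -/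
open Matrix Kronecker BigOperators ComplexOrder

/-- `N`-fold Kronecker (tensor) product of the family of matrices `A (l 1), …, A (l N)`. -/
def kronPow {d : ℕ} {ι : Type*} (A : ι → Matrix (Fin d) (Fin d) ℂ) {N : ℕ}
    (l : Fin N → ι) : Matrix (Fin N → Fin d) (Fin N → Fin d) ℂ :=
  fun x y => ∏ j, A (l j) (x j) (y j)

section Aux
variable {n : Type*} [Fintype n]

lemma trace_mul_vecMulVec (Ω : Matrix n n ℂ) (w : n → ℂ) :
    (Ω * vecMulVec w (star w)).trace = star w ⬝ᵥ (Ω *ᵥ w) := by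
  simp only [trace, diag, Matrix.mul_apply, vecMulVec_apply, dotProduct, mulVec,
    Pi.star_apply, dotProduct, Finset.mul_sum]
  apply Finset.sum_congr rfl; intro a _
  apply Finset.sum_congr rfl; intro b _
  ring

lemma conj_vecMulVec (B : Matrix n n ℂ) (ψ : n → ℂ) :
    B * vecMulVec ψ (star ψ) * Bᴴ = vecMulVec (B *ᵥ ψ) (star (B *ᵥ ψ)) := by
  ext a b
  simp only [Matrix.mul_apply, vecMulVec_apply, conjTranspose_apply, mulVec, dotProduct,
    Pi.star_apply, star_sum, star_mul', Finset.mul_sum, Finset.sum_mul]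
  apply Finset.sum_congr rfl; intro x _
  apply Finset.sum_congr rfl; intro y _
  ring

end Aux

lemma kronPow_expand {d r s N : ℕ} (E : Fin r → Matrix (Fin d) (Fin d) ℂ)
    (F : Fin s → Matrix (Fin d) (Fin d) ℂ) (c : Fin r → Fin s → ℂ)
    (hc : ∀ k, E k = ∑ j, c k j • F j) (i : Fin N → Fin r) :
    kronPow E i = ∑ l : Fin N → Fin s, (∏ j, c (i j) (l j)) • kronPow F l := by
  funext x y
  show (∏ j, E (i j) (x j) (y j)) = _
  simp only [hc, Finset.sum_apply, Matrix.sum_apply, Matrix.smul_apply, smul_eq_mul]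
  rw [Finset.prod_univ_sum, Fintype.piFinset_univ]
  apply Finset.sum_congr rfl; intro l _
  rw [kronPow, ← Finset.prod_mul_distrib]

/-- for quantum channels `Φ₀`, `Φ₁` with Kraus operators `{E_i}`, `{F_j}`,
if there exist `N`, a unit vector `|ψ⟩` and an effect `0 ≤ Ω₀ ≤ I` with
`Tr(Ω₀ (Φ₁^{⊗N}⊗I)(|ψ⟩⟨ψ|)) = 0` and `Tr(Ω₀ (Φ₀^{⊗N}⊗I)(|ψ⟩⟨ψ|)) > 0`, then
`span{E_i} ⊄ span{F_j}`. -/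
theorem stmt17 {d r s m N : ℕ} (E : Fin r → Matrix (Fin d) (Fin d) ℂ)
    (F : Fin s → Matrix (Fin d) (Fin d) ℂ)
    (hE : ∑ i, (E i)ᴴ * E i = 1) (hF : ∑ j, (F j)ᴴ * F j = 1)
    (ψ : (Fin N → Fin d) × Fin m → ℂ) (hψ : star ψ ⬝ᵥ ψ = 1)
    (Ω₀ : Matrix ((Fin N → Fin d) × Fin m) ((Fin N → Fin d) × Fin m) ℂ)
    (hΩ : Ω₀.PosSemidef)
    (hΩI : ((1 : Matrix ((Fin N → Fin d) × Fin m) ((Fin N → Fin d) × Fin m) ℂ) - Ω₀).PosSemidef)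
    (h0 : (Ω₀ * ∑ l : Fin N → Fin s,
        (kronPow F l ⊗ₖ (1 : Matrix (Fin m) (Fin m) ℂ)) * vecMulVec ψ (star ψ) *
          ((kronPow F l ⊗ₖ (1 : Matrix (Fin m) (Fin m) ℂ)))ᴴ).trace = 0)
    (h1 : 0 < ((Ω₀ * ∑ i : Fin N → Fin r,
        (kronPow E i ⊗ₖ (1 : Matrix (Fin m) (Fin m) ℂ)) * vecMulVec ψ (star ψ) *
          ((kronPow E i ⊗ₖ (1 : Matrix (Fin m) (Fin m) ℂ)))ᴴ).trace).re) :
    ¬ Submodule.span ℂ (Set.range E) ≤ Submodule.span ℂ (Set.range F) := by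
  intro hle
  choose c hc using fun k =>
    (Submodule.mem_span_range_iff_exists_fun ℂ).mp (hle (Submodule.subset_span ⟨k, rfl⟩))
  have hc' : ∀ k, E k = ∑ j, c k j • F j := fun k => (hc k).symm
  set w : (Fin N → Fin s) → ((Fin N → Fin d) × Fin m → ℂ) :=
    fun l => (kronPow F l ⊗ₖ (1 : Matrix (Fin m) (Fin m) ℂ)) *ᵥ ψ with hw
  have trace_rw : ∀ {ι : Type} [Fintype ι]
      (G : ι → Matrix ((Fin N → Fin d) × Fin m) ((Fin N → Fin d) × Fin m) ℂ),
      (Ω₀ * ∑ l : ι, G l * vecMulVec ψ (star ψ) * (G l)ᴴ).trace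
        = ∑ l : ι, star (G l *ᵥ ψ) ⬝ᵥ (Ω₀ *ᵥ (G l *ᵥ ψ)) := by
    intro ι _ G
    rw [Finset.mul_sum, trace_sum]
    exact Finset.sum_congr rfl fun l _ => by rw [conj_vecMulVec, trace_mul_vecMulVec]
  have h0' : ∀ l : Fin N → Fin s, Ω₀ *ᵥ w l = 0 := by
    rw [trace_rw] at h0
    intro l
    rw [← hΩ.dotProduct_mulVec_zero_iff (w l)]
    exact (Finset.sum_eq_zero_iff_of_nonneg (fun l _ => hΩ.dotProduct_mulVec_nonneg (w l))).mp h0 l (Finset.mem_univ l)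
  -- expand the E-vectors in terms of the w's
  have hu : ∀ i : Fin N → Fin r,
      (kronPow E i ⊗ₖ (1 : Matrix (Fin m) (Fin m) ℂ)) *ᵥ ψ
        = ∑ l : Fin N → Fin s, (∏ j, c (i j) (l j)) • w l := by
    intro i
    funext a
    simp only [mulVec, dotProduct, kroneckerMap_apply, kronPow_expand E F c hc' i,
      Matrix.sum_apply, Matrix.smul_apply, smul_eq_mul, Finset.sum_mul,
      Finset.sum_apply, Pi.smul_apply, hw]
    rw [Finset.sum_comm]
    apply Finset.sum_congr rfl; intro l _
    rw [Finset.mul_sum]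
    apply Finset.sum_congr rfl; intro b _
    ring
  have hzero : ∀ i : Fin N → Fin r,
      Ω₀ *ᵥ ((kronPow E i ⊗ₖ (1 : Matrix (Fin m) (Fin m) ℂ)) *ᵥ ψ) = 0 := by
    intro i
    rw [hu i, ← Ω₀.mulVecLin_apply, map_sum]
    refine Finset.sum_eq_zero fun l _ => ?_
    rw [_root_.map_smul, Ω₀.mulVecLin_apply, h0' l, smul_zero]
  rw [trace_rw] at h1
  have : (∑ i : Fin N → Fin r,
      star ((kronPow E i ⊗ₖ (1 : Matrix (Fin m) (Fin m) ℂ)) *ᵥ ψ) ⬝ᵥ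
        (Ω₀ *ᵥ ((kronPow E i ⊗ₖ (1 : Matrix (Fin m) (Fin m) ℂ)) *ᵥ ψ))) = 0 := by
    refine Finset.sum_eq_zero fun i _ => ?_
    rw [hzero i, dotProduct_zero]
  rw [this] at h1
  simp at h1
end
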